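/- Let (X, μ) be a measure space and let H be a finite group of order N acting on X by measurable measure-preserving bijections, inducing a unitary action on L²(μ) by (h·f)(x) = f(h^{−1}x). Let W ⊆ L²(μ) be a finite-dimensional subspace invariant under this action, and let P_W denote the orthogonal projection onto W. Let f ∈ L²(μ) be such that the supports of the functions h·f, for h ∈ H, are pairwise almost-everywhere disjoint. Then ‖P_W f‖₂² ≤ (dim W / N)·‖f‖₂². -/

import Mathlib

open MeasureTheory

namespace ProjBoundAux

local notation "⟪" x ", " y "⟫" => @inner ℝ _ _ x y

variable {X : Type*} [MeasurableSpace X] {μ : Measure X}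
  {H : Type*} [Group H] [MulAction H X]

/-- The translation operator on `L²`. -/
noncomputable def transl (hact : ∀ h : H, MeasurePreserving (fun x : X => h • x) μ μ)
    (h : H) (g : Lp ℝ 2 μ) : Lp ℝ 2 μ :=
  MemLp.toLp (fun x => g (h⁻¹ • x))
    ((Lp.memLp g).comp_measurePreserving (hact h⁻¹))

variable (hact : ∀ h : H, MeasurePreserving (fun x : X => h • x) μ μ)

include hact

lemma transl_coeFn (h : H) (g : Lp ℝ 2 μ) :
    transl hact h g =ᵐ[μ] fun x => g (h⁻¹ • x) :=
  MemLp.coeFn_toLp _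

lemma transl_ae_eq {g g' : X → ℝ} (hg : g =ᵐ[μ] g') (h : H) :
    (fun x => g (h⁻¹ • x)) =ᵐ[μ] fun x => g' (h⁻¹ • x) :=
  (hact h⁻¹).quasiMeasurePreserving.ae_eq_comp hg

lemma transl_toLp {g : X → ℝ} (hg : MemLp g 2 μ) (h : H) :
    transl hact h (hg.toLp g) =ᵐ[μ] fun x => g (h⁻¹ • x) :=
  (transl_coeFn hact h _).trans (transl_ae_eq hact hg.coeFn_toLp h)

lemma transl_norm (h : H) (g : Lp ℝ 2 μ) : ‖transl hact h g‖ = ‖g‖ := by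
  rw [transl, Lp.norm_toLp, Lp.norm_def]
  congr 1
  exact eLpNorm_comp_measurePreserving (Lp.aestronglyMeasurable g) (hact h⁻¹)

/-- The smul map as a measurable equivalence. -/
noncomputable def smulEquiv (h : H) : X ≃ᵐ X where
  toFun := fun x => h • x
  invFun := fun x => h⁻¹ • x
  left_inv := fun x => inv_smul_smul h x
  right_inv := fun x => smul_inv_smul h x
  measurable_toFun := (hact h).measurable
  measurable_invFun := (hact h⁻¹).measurable

lemma transl_inner (h : H) (a b : Lp ℝ 2 μ) :
    ⟪transl hact h a, transl hact h b⟫ = ⟪a, b⟫ := by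
  rw [L2.inner_def, L2.inner_def]
  have h1 : (fun x => ⟪(transl hact h a) x, (transl hact h b) x⟫)
      =ᵐ[μ] fun x => ⟪a (h⁻¹ • x), b (h⁻¹ • x)⟫ := by
    filter_upwards [transl_coeFn hact h a, transl_coeFn hact h b] with x hx hy
    rw [hx, hy]
  rw [integral_congr_ae h1]
  exact (hact h⁻¹).integral_comp' (f := smulEquiv hact h⁻¹)
    (fun y => ⟪a y, b y⟫)

lemma transl_transl (h : H) (a : Lp ℝ 2 μ) :
    transl hact h⁻¹ (transl hact h a) = a := by
  apply Lp.ext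
  refine (transl_coeFn hact h⁻¹ _).trans ?_
  have := transl_ae_eq hact (transl_coeFn hact h a) h⁻¹
  refine this.trans ?_
  simp only [inv_inv]
  filter_upwards with x
  rw [inv_smul_smul]

lemma transl_inner_adj (h : H) (a b : Lp ℝ 2 μ) :
    ⟪transl hact h a, b⟫ = ⟪a, transl hact h⁻¹ b⟫ := by
  conv_lhs => rw [← transl_transl hact h⁻¹ b]
  rw [inv_inv, transl_inner]

lemma transl_sub (h : H) (a b : Lp ℝ 2 μ) :
    transl hact h (a - b) = transl hact h a - transl hact h b := by
  apply Lp.ext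
  refine (transl_coeFn hact h _).trans ?_
  have h1 := transl_ae_eq hact (Lp.coeFn_sub a b) h
  refine h1.trans ?_
  filter_upwards [Lp.coeFn_sub (transl hact h a) (transl hact h b),
    transl_coeFn hact h a, transl_coeFn hact h b] with x h2 h3 h4
  simp only [Pi.sub_apply] at h2 ⊢
  rw [h2, h3, h4]

end ProjBoundAux

open ProjBoundAux

/-- Projection bound for invariant subspaces under a finite group action with disjointly
supported translates: if a finite group `H` of order `N` acts on `(X, μ)` by measure
preserving maps, `W ⊆ L²(μ)` is a finite-dimensional subspace invariant under the induced
action `(h·f)(x) = f(h⁻¹x)`, and `f ∈ L²(μ)` has the supports of its translates `h·f`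
pairwise almost-everywhere disjoint, then `‖P_W f‖₂² ≤ (dim W / N)·‖f‖₂²`. -/
theorem projection_bound_of_invariant_subspace
    {X : Type*} [MeasurableSpace X] (μ : Measure X)
    {H : Type*} [Group H] [Fintype H] [MulAction H X]
    (hact : ∀ h : H, MeasurePreserving (fun x : X => h • x) μ μ)
    (W : Submodule ℝ (Lp ℝ 2 μ)) [FiniteDimensional ℝ W]
    (hWinv : ∀ (h : H) (w : Lp ℝ 2 μ), w ∈ W →
      ∀ (hw : MemLp (fun x => w (h⁻¹ • x)) 2 μ),
        MemLp.toLp (fun x => w (h⁻¹ • x)) hw ∈ W)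
    (f : X → ℝ) (hf : MemLp f 2 μ)
    (hdisj : ∀ h h' : H, h ≠ h' →
      μ {x : X | f (h⁻¹ • x) ≠ 0 ∧ f (h'⁻¹ • x) ≠ 0} = 0) :
    ‖(Submodule.orthogonalProjectionOnto W (MemLp.toLp f hf) : Lp ℝ 2 μ)‖ ^ 2 ≤
      ((Module.finrank ℝ W : ℝ) / (Fintype.card H : ℝ)) * ‖MemLp.toLp f hf‖ ^ 2 := by
  classical
  set F : Lp ℝ 2 μ := MemLp.toLp f hf with hFdef
  -- translates stay in W
  have hWtransl : ∀ (h : H) (w : Lp ℝ 2 μ), w ∈ W → transl hact h w ∈ W := by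
    intro h w hw
    exact hWinv h w hw _
  -- projection commutes with translation
  have hPcomm : ∀ (h : H) (g : Lp ℝ 2 μ),
      (Submodule.orthogonalProjectionOnto W (transl hact h g) : Lp ℝ 2 μ)
        = transl hact h (Submodule.orthogonalProjectionOnto W g : Lp ℝ 2 μ) := by
    intro h g
    rw [Submodule.coe_orthogonalProjectionOnto_apply, Submodule.coe_orthogonalProjectionOnto_apply]
    apply Submodule.eq_starProjection_of_mem_of_inner_eq_zero
    · exact hWtransl h _ (SetLike.coe_mem _)
    · intro w hw
      rw [← transl_sub hact, transl_inner_adj hact]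
      have hw' : transl hact h⁻¹ w ∈ W := hWtransl h⁻¹ w hw
      exact Submodule.starProjection_inner_eq_zero g _ hw'
  -- orthogonality of translates
  have horth : ∀ h h' : H, h ≠ h' → inner ℝ (transl hact h F) (transl hact h' F) = (0 : ℝ) := by
    intro h h' hne
    rw [L2.inner_def]
    have h1 : (fun x => inner ℝ ((transl hact h F) x) ((transl hact h' F) x))
        =ᵐ[μ] fun x => f (h⁻¹ • x) * f (h'⁻¹ • x) := by
      filter_upwards [transl_toLp hact hf h, transl_toLp hact hf h'] with x hx hy
      rw [hx, hy]; exact Real.inner_apply _ _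
    rw [integral_congr_ae h1]
    have h2 : (fun x => f (h⁻¹ • x) * f (h'⁻¹ • x)) =ᵐ[μ] 0 := by
      rw [Filter.EventuallyEq, ae_iff]
      refine measure_mono_null ?_ (hdisj h h' hne)
      intro x hx
      simp only [Set.mem_setOf_eq] at hx ⊢
      constructor <;> intro h0 <;> apply hx <;> simp [h0]
    rw [integral_congr_ae h2]
    simp
  -- norms of translates
  have hnorm : ∀ h : H, ‖transl hact h F‖ = ‖F‖ := fun h => transl_norm hact h F
  by_cases hF0 : F = 0
  · rw [hF0]
    simp
  · have hFpos : (0 : ℝ) < ‖F‖ := norm_pos_iff.mpr hF0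
    -- orthonormal family of normalized translates
    set e : H → Lp ℝ 2 μ := fun h => (‖F‖)⁻¹ • transl hact h F with hedef
    have he : Orthonormal ℝ e := by
      rw [orthonormal_iff_ite]
      intro h h'
      by_cases hne : h = h'
      · subst hne
        simp only [hedef, real_inner_smul_left, real_inner_smul_right, if_pos rfl, ↓reduceIte]
        rw [real_inner_self_eq_norm_sq, hnorm h]
        field_simp
      · simp only [hedef, real_inner_smul_left, real_inner_smul_right, if_neg hne,
          horth h h' hne, mul_zero]
    -- orthonormal basis of W
    set n := Module.finrank ℝ W with hndef
    set b := stdOrthonormalBasis ℝ W with hbdef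
    set u : Fin n → Lp ℝ 2 μ := fun i => (b i : Lp ℝ 2 μ) with hudef
    -- norm of projection as sum of squared inner products
    have hproj : ∀ g : Lp ℝ 2 μ,
        ‖(Submodule.orthogonalProjectionOnto W g : Lp ℝ 2 μ)‖ ^ 2 = ∑ i, (inner ℝ (u i) g : ℝ) ^ 2 := by
      intro g
      have h1 : ‖(Submodule.orthogonalProjectionOnto W g : Lp ℝ 2 μ)‖ = ‖Submodule.orthogonalProjectionOnto W g‖ := rfl
      rw [h1, ← b.repr.norm_map (Submodule.orthogonalProjectionOnto W g), EuclideanSpace.norm_eq,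
        Real.sq_sqrt (by positivity)]
      congr 1
      ext i
      rw [b.repr_apply_apply, Submodule.inner_orthogonalProjectionOnto_eq_of_mem_left]
      rw [Real.norm_eq_abs, sq_abs, hudef]
    have hN : (0 : ℝ) < (Fintype.card H : ℝ) := by
      exact_mod_cast Fintype.card_pos
    -- main estimate
    have key : (Fintype.card H : ℝ) * ‖(Submodule.orthogonalProjectionOnto W F : Lp ℝ 2 μ)‖ ^ 2
        ≤ (n : ℝ) * ‖F‖ ^ 2 := by
      have step1 : ∀ h : H,
          ‖(Submodule.orthogonalProjectionOnto W F : Lp ℝ 2 μ)‖ ^ 2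
            = ∑ i, (inner ℝ (u i) (transl hact h F) : ℝ) ^ 2 := by
        intro h
        rw [← hproj (transl hact h F), hPcomm, transl_norm]
      calc (Fintype.card H : ℝ) * ‖(Submodule.orthogonalProjectionOnto W F : Lp ℝ 2 μ)‖ ^ 2
          = ∑ _h : H, ‖(Submodule.orthogonalProjectionOnto W F : Lp ℝ 2 μ)‖ ^ 2 := by
            rw [Finset.sum_const, Finset.card_univ, nsmul_eq_mul]
        _ = ∑ h : H, ∑ i, (inner ℝ (u i) (transl hact h F) : ℝ) ^ 2 := by
            exact Finset.sum_congr rfl fun h _ => step1 h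
        _ = ∑ i, ∑ h : H, (inner ℝ (u i) (transl hact h F) : ℝ) ^ 2 := Finset.sum_comm
        _ ≤ ∑ _i : Fin n, ‖F‖ ^ 2 * 1 := by
            apply Finset.sum_le_sum
            intro i _
            have hexp : ∀ h : H, (inner ℝ (u i) (transl hact h F) : ℝ) ^ 2
                = ‖F‖ ^ 2 * (inner ℝ (e h) (u i) : ℝ) ^ 2 := by
              intro h
              rw [hedef]
              simp only [real_inner_smul_left]
              rw [real_inner_comm (transl hact h F) (u i)]
              rw [mul_pow, inv_pow]
              field_simp
            rw [Finset.sum_congr rfl fun h _ => hexp h, ← Finset.mul_sum]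
            apply mul_le_mul_of_nonneg_left ?_ (by positivity)
            have hb1 : ∑ h : H, (inner ℝ (e h) (u i) : ℝ) ^ 2 ≤ ‖u i‖ ^ 2 := by
              have := he.sum_inner_products_le (s := Finset.univ) (u i)
              simpa only [Real.norm_eq_abs, sq_abs] using this
            have hui : ‖u i‖ = 1 := by
              rw [hudef]
              have := b.orthonormal.1 i
              exact this
            rw [hui, one_pow] at hb1
            exact hb1
        _ = (n : ℝ) * ‖F‖ ^ 2 := by
            rw [Finset.sum_const, Finset.card_univ, Fintype.card_fin, nsmul_eq_mul, mul_one]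
    rw [div_mul_eq_mul_div, le_div_iff₀ hN, mul_comm _ ((Fintype.card H : ℝ))]
    exact key
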